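/- Let H be a block matrix and L an invertible q×q matrix. If L R_S(H,ω) L⁻¹ = R_S(H,ω*)† holds for all ω in some nonempty open subset of ℂ outside the spectrum of H_S̄S̄ (equivalently, for all ω with |ω| sufficiently large), then L H_SS L⁻¹ = H_SS† and L [H_SS̄ (H_S̄S̄)^n H_S̄S] L⁻¹ = [H_SS̄ (H_S̄S̄)^n H_S̄S]† for all n ≥ 0. -/

import Mathlib

open Matrix Filter Topology

set_option linter.unusedVariables false

namespace IsoAuxProof

section NormSection

attribute [local instance] Matrix.linftyOpNormedAddCommGroup Matrix.linftyOpNormedRing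
  Matrix.linftyOpNormedSpace

variable {m : ℕ}

private lemma entry_le (M : Matrix (Fin m) (Fin m) ℂ) (i j : Fin m) : ‖M i j‖ ≤ ‖M‖ := by
  have h1 : ‖M i j‖₊ ≤ ∑ j', ‖M i j'‖₊ :=
    Finset.single_le_sum (f := fun j' => ‖M i j'‖₊) (fun _ _ => zero_le) (Finset.mem_univ j)
  have h2 : (∑ j', ‖M i j'‖₊) ≤ Finset.univ.sup fun i => ∑ j', ‖M i j'‖₊ :=
    Finset.le_sup (f := fun i => ∑ j', ‖M i j'‖₊) (Finset.mem_univ i)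
  rw [Matrix.linfty_opNorm_def]
  exact_mod_cast h1.trans h2

lemma resolvent_bound (A : Matrix (Fin m) (Fin m) ℂ) :
    ∃ T K : ℝ, 0 < T ∧ ∀ t : ℝ, T ≤ t → IsUnit (A - (t : ℂ) • 1) ∧
      ∀ i j, ‖((A - (t : ℂ) • 1)⁻¹) i j‖ ≤ K / t := by
  refine ⟨2 * ‖A‖ + 1, ‖(1 : Matrix (Fin m) (Fin m) ℂ)‖ + 1, by positivity, fun t ht => ?_⟩
  have ht0 : (0:ℝ) < t := lt_of_lt_of_le (by positivity) ht
  have htc : (t : ℂ) ≠ 0 := by exact_mod_cast ht0.ne'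
  set x : Matrix (Fin m) (Fin m) ℂ := (t : ℂ)⁻¹ • A with hxdef
  have hxn : ‖x‖ ≤ 1 / 2 := by
    rw [hxdef, norm_smul, norm_inv, Complex.norm_real, Real.norm_of_nonneg ht0.le]
    rw [inv_mul_le_iff₀ ht0]
    nlinarith [norm_nonneg A]
  have hx1 : ‖x‖ < 1 := lt_of_le_of_lt hxn (by norm_num)
  set u := Units.oneSub x hx1 with hu
  have hmul : (A - (t:ℂ) • 1) * ((-(t:ℂ))⁻¹ • (↑u⁻¹ : Matrix (Fin m) (Fin m) ℂ)) = 1 := by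
    have hfact : A - (t:ℂ) • 1 = (-(t:ℂ)) • (u : Matrix (Fin m) (Fin m) ℂ) := by
      rw [hu, Units.val_oneSub, smul_sub, smul_smul, neg_mul, mul_inv_cancel₀ htc,
        neg_smul, neg_smul, one_smul, sub_neg_eq_add, neg_add_eq_sub]
    rw [hfact, smul_mul_assoc, mul_smul_comm, smul_smul, inv_neg, neg_mul_neg,
      mul_inv_cancel₀ htc, one_smul, Units.mul_inv]
  refine ⟨(Matrix.isUnit_iff_isUnit_det _).mpr (Matrix.isUnit_det_of_right_inverse hmul), fun i j => ?_⟩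
  have hinv : (A - (t:ℂ) • 1)⁻¹ = (-(t:ℂ))⁻¹ • (↑u⁻¹ : Matrix (Fin m) (Fin m) ℂ) :=
    Matrix.inv_eq_right_inv hmul
  have hun : ‖(↑u⁻¹ : Matrix (Fin m) (Fin m) ℂ)‖ ≤ ‖(1 : Matrix (Fin m) (Fin m) ℂ)‖ + 1 := by
    have h2 : (1 - ‖x‖)⁻¹ ≤ 2 := by
      rw [inv_le_comm₀ (by linarith) (by norm_num)]
      linarith
    have := tsum_geometric_le_of_norm_lt_one x hx1
    have hval : (↑u⁻¹ : Matrix (Fin m) (Fin m) ℂ) = ∑' n : ℕ, x ^ n := rfl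
    rw [hval]
    refine this.trans ?_
    linarith
  calc ‖((A - (t:ℂ) • 1)⁻¹) i j‖ ≤ ‖(A - (t:ℂ) • 1)⁻¹‖ := entry_le _ i j
    _ = ‖(-(t:ℂ))⁻¹‖ * ‖(↑u⁻¹ : Matrix (Fin m) (Fin m) ℂ)‖ := by rw [hinv, norm_smul]
    _ ≤ t⁻¹ * (‖(1 : Matrix (Fin m) (Fin m) ℂ)‖ + 1) := by
        rw [norm_inv, norm_neg, Complex.norm_real, Real.norm_of_nonneg ht0.le]
        exact mul_le_mul_of_nonneg_left hun (by positivity)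
    _ = (‖(1 : Matrix (Fin m) (Fin m) ℂ)‖ + 1) / t := by ring

end NormSection

lemma tendsto_resolvent {m : ℕ} (A : Matrix (Fin m) (Fin m) ℂ) :
    Tendsto (fun t : ℝ => (A - (t : ℂ) • 1)⁻¹) atTop (𝓝 0) := by
  obtain ⟨T, K, hT, hTK⟩ := resolvent_bound A
  refine tendsto_pi_nhds.mpr fun i => ?_
  refine tendsto_pi_nhds.mpr fun j => ?_
  have h0 : Tendsto (fun t : ℝ => K / t) atTop (𝓝 0) :=
    Tendsto.div_atTop tendsto_const_nhds tendsto_id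
  refine squeeze_zero_norm' ?_ h0
  filter_upwards [eventually_ge_atTop T] with t ht
  exact (hTK t ht).2 i j

end IsoAuxProof

open IsoAuxProof

/-- If the symmetry `L R_S(H,ω) L⁻¹ = R_S(H,ω*)†` of the isospectral reduction
holds for all ω of sufficiently large modulus, then L conjugates H_SS and all
the matrices `H_SS̄ (H_S̄S̄)^n H_S̄S` to their Hermitian adjoints. -/
theorem isospectral_symmetry_implies_block_relations (p q : ℕ)
    (A : Matrix (Fin p) (Fin p) ℂ) (B : Matrix (Fin p) (Fin q) ℂ)
    (C : Matrix (Fin q) (Fin p) ℂ) (D : Matrix (Fin q) (Fin q) ℂ)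
    (L : Matrix (Fin q) (Fin q) ℂ) (hL : IsUnit L)
    (h : ∃ c : ℝ, ∀ ω : ℂ, c < ‖ω‖ →
        L * (D - C * (A - ω • 1)⁻¹ * B) * L⁻¹
          = (D - C * (A - (starRingEnd ℂ ω) • 1)⁻¹ * B)ᴴ) :
    L * D * L⁻¹ = Dᴴ ∧
      ∀ n : ℕ, L * (C * A ^ n * B) * L⁻¹ = (C * A ^ n * B)ᴴ := by
  classical
  obtain ⟨c, hc⟩ := h
  obtain ⟨T, K, hT, hTK⟩ := resolvent_bound A
  -- notation
  let Y : ℝ → Matrix (Fin p) (Fin p) ℂ := fun t => (A - (t : ℂ) • 1)⁻¹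
  let M : ℕ → Matrix (Fin q) (Fin q) ℂ :=
    fun n => L * (C * A ^ n * B) * L⁻¹ - (C * A ^ n * B)ᴴ
  let F : ℕ → ℝ → Matrix (Fin q) (Fin q) ℂ :=
    fun n t => L * (C * A ^ n * Y t * B) * L⁻¹ - (C * A ^ n * Y t * B)ᴴ
  -- limits
  have tendF : ∀ n, Tendsto (F n) atTop (𝓝 0) := by
    intro n
    have h1 : Continuous fun X : Matrix (Fin p) (Fin p) ℂ => C * A ^ n * X * B :=
      (continuous_const.matrix_mul continuous_id).matrix_mul continuous_const
    have hcont : Continuous fun X : Matrix (Fin p) (Fin p) ℂ =>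
        L * (C * A ^ n * X * B) * L⁻¹ - (C * A ^ n * X * B)ᴴ :=
      ((continuous_const.matrix_mul h1).matrix_mul continuous_const).sub
        h1.matrix_conjTranspose
    have := (hcont.tendsto 0).comp (tendsto_resolvent A)
    simp only [Matrix.mul_zero, Matrix.zero_mul, Matrix.conjTranspose_zero, sub_zero,
      sub_self] at this
    exact this
  have const_eq_zero : ∀ (n : ℕ) (Z : Matrix (Fin q) (Fin q) ℂ),
      (∀ᶠ t : ℝ in atTop, F n t = Z) → Z = 0 := fun n Z hZ =>
    tendsto_nhds_unique tendsto_const_nhds ((tendsto_congr' hZ).mp (tendF n))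
  -- eventual facts
  have hev : ∀ᶠ t : ℝ in atTop,
      c < ‖(t : ℂ)‖ ∧ IsUnit (A - (t : ℂ) • 1) ∧ (t : ℂ) ≠ 0 := by
    filter_upwards [eventually_ge_atTop (max T (max (c + 1) 1))] with t ht
    have h1 : T ≤ t := le_trans (le_max_left _ _) ht
    have h2 : c + 1 ≤ t := le_trans (le_trans (le_max_left _ _) (le_max_right _ _)) ht
    have h3 : (1 : ℝ) ≤ t := le_trans (le_trans (le_max_right _ _) (le_max_right _ _)) ht
    refine ⟨?_, (hTK t h1).1, ?_⟩
    · rw [Complex.norm_real, Real.norm_of_nonneg (by linarith)]; linarith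
    · exact_mod_cast (by linarith : (0 : ℝ) < t).ne'
  -- base case
  have base : ∀ᶠ t : ℝ in atTop, F 0 t = L * D * L⁻¹ - Dᴴ := by
    filter_upwards [hev] with t ht
    obtain ⟨h1, h2, h3⟩ := ht
    have hsym := hc (t : ℂ) h1
    rw [Complex.conj_ofReal] at hsym
    rw [mul_sub, sub_mul, conjTranspose_sub] at hsym
    have hF0 : F 0 t = L * (C * (A - (t : ℂ) • 1)⁻¹ * B) * L⁻¹
        - (C * (A - (t : ℂ) • 1)⁻¹ * B)ᴴ := by
      show L * (C * A ^ 0 * Y t * B) * L⁻¹ - (C * A ^ 0 * Y t * B)ᴴ = _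
      rw [pow_zero, Matrix.mul_one]
    rw [hF0]
    exact (sub_eq_sub_iff_sub_eq_sub.mp hsym).symm
  have hD : L * D * L⁻¹ = Dᴴ := by
    have := const_eq_zero 0 _ base
    rwa [sub_eq_zero] at this
  -- recurrence
  have hrec : ∀ n : ℕ, ∀ᶠ t : ℝ in atTop, F (n + 1) t = M n + (t : ℂ) • F n t := by
    intro n
    filter_upwards [hev] with t ht
    obtain ⟨h1, h2, h3⟩ := ht
    have hinv : (A - (t : ℂ) • 1) * Y t = 1 :=
      Matrix.mul_nonsing_inv _ ((Matrix.isUnit_iff_isUnit_det _).mp h2)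
    rw [sub_mul, smul_mul_assoc, one_mul] at hinv
    have hAY : A * Y t = 1 + (t : ℂ) • Y t := eq_add_of_sub_eq hinv
    have E1 : C * A ^ (n + 1) * Y t * B
        = C * A ^ n * B + (t : ℂ) • (C * A ^ n * Y t * B) := by
      rw [pow_succ, ← Matrix.mul_assoc, Matrix.mul_assoc (C * A ^ n) A (Y t), hAY,
        Matrix.mul_add, Matrix.mul_one, Matrix.mul_smul, Matrix.add_mul, Matrix.smul_mul]
    show L * (C * A ^ (n + 1) * Y t * B) * L⁻¹ - (C * A ^ (n + 1) * Y t * B)ᴴ = _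
    rw [E1, conjTranspose_add, Matrix.conjTranspose_smul, mul_add, add_mul,
      mul_smul_comm, smul_mul_assoc, Complex.star_def, Complex.conj_ofReal]
    show _ = (L * (C * A ^ n * B) * L⁻¹ - (C * A ^ n * B)ᴴ)
        + (t : ℂ) • (L * (C * A ^ n * Y t * B) * L⁻¹ - (C * A ^ n * Y t * B)ᴴ)
    rw [smul_sub]
    abel
  -- induction
  have main : ∀ n : ℕ, (∀ᶠ t : ℝ in atTop, F n t = 0) →
      M n = 0 ∧ ∀ᶠ t : ℝ in atTop, F (n + 1) t = 0 := by
    intro n hn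
    have hev2 : ∀ᶠ t : ℝ in atTop, F (n + 1) t = M n := by
      filter_upwards [hn, hrec n] with t h0 hr
      rw [hr, h0, smul_zero, add_zero]
    have hM : M n = 0 := const_eq_zero (n + 1) _ hev2
    exact ⟨hM, by filter_upwards [hev2] with t h'; rw [h', hM]⟩
  have S0 : ∀ᶠ t : ℝ in atTop, F 0 t = 0 := by
    filter_upwards [base] with t h'
    rw [h', hD, sub_self]
  have Sall : ∀ n : ℕ, ∀ᶠ t : ℝ in atTop, F n t = 0 := by
    intro n
    induction n with
    | zero => exact S0
    | succ k ih => exact (main k ih).2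
  refine ⟨hD, fun n => ?_⟩
  have := (main n (Sall n)).1
  rwa [sub_eq_zero] at this
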